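/- Let A ∈ ℂ^{n×n} and B = diag(b₁,…,bₙ) a real diagonal matrix with B ≠ 0. Define the Hermitian matrix H̃₁ = [[H₁ᴬ, B/2],[Bᵀ/2, 0]] ∈ ℂ^{2n×2n}, where H₁ᴬ = (A+A†)/2. Then H̃₁ has at least one strictly positive eigenvalue and at least one strictly negative eigenvalue. -/

import Mathlib

open Matrix
open scoped ComplexOrder

lemma quad_two_entries {m : Type*} [Fintype m] [DecidableEq m]
    (M : Matrix m m ℂ) (j k : m) (c d : ℂ) :
    star (Pi.single j c + Pi.single k d) ⬝ᵥ M *ᵥ (Pi.single j c + Pi.single k d)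
      = (starRingEnd ℂ) c * (M j j * c + M j k * d)
        + (starRingEnd ℂ) d * (M k j * c + M k k * d) := by
  simp [star_add, mulVec_add, mulVec_single, add_dotProduct, dotProduct_add,
    single_dotProduct, ← Pi.single_star, mul_add]
  ring

lemma negSemidef_of_eigenvalues_nonpos {m : Type*} [Fintype m] [DecidableEq m]
    {M : Matrix m m ℂ} (hM : M.IsHermitian) (h : ∀ i, hM.eigenvalues i ≤ 0) :
    Matrix.PosSemidef (-M) := by
  have key : -M = (hM.eigenvectorUnitary : Matrix m m ℂ) *
      diagonal (fun i => ((-hM.eigenvalues i : ℝ) : ℂ)) *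
      ((hM.eigenvectorUnitary : Matrix m m ℂ))ᴴ := by
    conv_lhs => rw [hM.spectral_theorem]
    have : (diagonal (fun i => ((-hM.eigenvalues i : ℝ) : ℂ)))
        = -diagonal (RCLike.ofReal ∘ hM.eigenvalues) := by
      ext i j
      by_cases h' : i = j <;> simp [diagonal, h', RCLike.ofReal]
    rw [this, Unitary.conjStarAlgAut_apply, Matrix.star_eq_conjTranspose, Matrix.mul_neg, Matrix.neg_mul]
  rw [key]
  refine Matrix.PosSemidef.mul_mul_conjTranspose_same ?_ _
  exact Matrix.PosSemidef.diagonal fun i => Complex.zero_le_real.mpr (by linarith [h i])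

/-- If `A ∈ ℂ^{n×n}` and `B` is a nonzero real diagonal matrix, then the Hermitian block
matrix `H̃₁ = [[H₁ᴬ, B/2],[Bᵀ/2, 0]]`, with `H₁ᴬ = (A + Aᴴ)/2`, has at least one strictly
positive and at least one strictly negative (real) eigenvalue. -/
theorem tildeH1_has_pos_and_neg_eigenvalue {n : ℕ} (A : Matrix (Fin n) (Fin n) ℂ)
    (b : Fin n → ℝ) (hb : Matrix.diagonal b ≠ 0)
    (H1A : Matrix (Fin n) (Fin n) ℂ) (hH1A : H1A = (2 : ℂ)⁻¹ • (A + Aᴴ))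
    (Ht1 : Matrix (Fin n ⊕ Fin n) (Fin n ⊕ Fin n) ℂ)
    (hHt1 : Ht1 = Matrix.fromBlocks H1A
      ((2 : ℂ)⁻¹ • (Matrix.diagonal b).map Complex.ofReal)
      ((2 : ℂ)⁻¹ • ((Matrix.diagonal b).map Complex.ofReal)ᵀ) 0) :
    (∃ μ : ℝ, 0 < μ ∧ (μ : ℂ) ∈ spectrum ℂ Ht1) ∧
    (∃ μ : ℝ, μ < 0 ∧ (μ : ℂ) ∈ spectrum ℂ Ht1) := by
  obtain ⟨i, hbi⟩ : ∃ i, b i ≠ 0 := by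
    by_contra h
    push_neg at h
    exact hb (by ext j k; simp [Matrix.diagonal_apply, h])
  -- Ht1 is Hermitian
  have hHerm : Ht1.IsHermitian := by
    rw [hHt1, hH1A]
    show _ᴴ = _
    ext (j | j) (k | k)
    · simp [Matrix.conjTranspose_apply, mul_comm, map_add, add_comm]
    · simp only [Matrix.conjTranspose_apply, Matrix.fromBlocks_apply₁₂,
        Matrix.fromBlocks_apply₂₁, Matrix.smul_apply, Matrix.transpose_apply, Matrix.map_apply,
        Matrix.diagonal_apply, smul_eq_mul]
      split_ifs with h <;> simp [Complex.conj_ofReal, h, _root_.map_mul, map_inv₀, _root_.map_ofNat, eq_comm]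
    · simp only [Matrix.conjTranspose_apply, Matrix.fromBlocks_apply₁₂,
        Matrix.fromBlocks_apply₂₁, Matrix.smul_apply, Matrix.transpose_apply, Matrix.map_apply,
        Matrix.diagonal_apply, smul_eq_mul]
      split_ifs with h <;> simp [Complex.conj_ofReal, h, _root_.map_mul, map_inv₀, _root_.map_ofNat, eq_comm]
    · simp
  -- quadratic form
  have quad : ∀ s : ℝ,
      star (Pi.single (Sum.inl i) (1:ℂ) + Pi.single (Sum.inr i) ((s:ℝ):ℂ)) ⬝ᵥ
        Ht1 *ᵥ (Pi.single (Sum.inl i) (1:ℂ) + Pi.single (Sum.inr i) ((s:ℝ):ℂ))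
      = (((A i i).re + s * b i : ℝ) : ℂ) := by
    intro s
    rw [quad_two_entries]
    have e11 : Ht1 (Sum.inl i) (Sum.inl i) = ((A i i).re : ℂ) := by
      rw [hHt1, hH1A]
      simp [Matrix.conjTranspose_apply]
      rw [← mul_add, Complex.add_conj]
      push_cast
      ring
    have e12 : Ht1 (Sum.inl i) (Sum.inr i) = (2:ℂ)⁻¹ * (b i : ℂ) := by
      rw [hHt1]; simp
    have e21 : Ht1 (Sum.inr i) (Sum.inl i) = (2:ℂ)⁻¹ * (b i : ℂ) := by
      rw [hHt1]; simp
    have e22 : Ht1 (Sum.inr i) (Sum.inr i) = 0 := by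
      rw [hHt1]; simp
    rw [e11, e12, e21, e22]
    simp [Complex.conj_ofReal]
    ring
  constructor
  · -- positive eigenvalue
    set s : ℝ := (1 + |(A i i).re|) / b i with hs
    have hsb : s * b i = 1 + |(A i i).re| := div_mul_cancel₀ _ hbi
    have hQ : (0:ℝ) < (A i i).re + s * b i := by
      rw [hsb]; cases abs_cases (A i i).re <;> linarith
    obtain ⟨j, hj⟩ : ∃ j, 0 < hHerm.eigenvalues j := by
      by_contra h
      push_neg at h
      have hps := negSemidef_of_eigenvalues_nonpos hHerm h
      have := hps.dotProduct_mulVec_nonneg (Pi.single (Sum.inl i) (1:ℂ) + Pi.single (Sum.inr i) ((s:ℝ):ℂ))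
      rw [Matrix.neg_mulVec, dotProduct_neg, quad s] at this
      rw [le_neg, neg_zero] at this
      have := Complex.real_le_real.mp (by exact_mod_cast this)
      linarith
    refine ⟨hHerm.eigenvalues j, hj, ?_⟩
    have := hHerm.eigenvalues_mem_spectrum_real j
    rw [← Complex.coe_algebraMap]
    exact spectrum.algebraMap_mem ℂ this
  · -- negative eigenvalue
    set s : ℝ := -(1 + |(A i i).re|) / b i with hs
    have hsb : s * b i = -(1 + |(A i i).re|) := div_mul_cancel₀ _ hbi
    have hQ : (A i i).re + s * b i < 0 := by
      rw [hsb]; cases abs_cases (A i i).re <;> linarith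
    obtain ⟨j, hj⟩ : ∃ j, hHerm.eigenvalues j < 0 := by
      by_contra h
      push_neg at h
      have hps := hHerm.posSemidef_iff_eigenvalues_nonneg.mpr (fun j => h j)
      have := hps.dotProduct_mulVec_nonneg (Pi.single (Sum.inl i) (1:ℂ) + Pi.single (Sum.inr i) ((s:ℝ):ℂ))
      rw [quad s] at this
      have := Complex.real_le_real.mp (by exact_mod_cast this)
      linarith
    refine ⟨hHerm.eigenvalues j, hj, ?_⟩
    have := hHerm.eigenvalues_mem_spectrum_real j
    rw [← Complex.coe_algebraMap]
    exact spectrum.algebraMap_mem ℂ this
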